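/- Let a < b be real numbers and let f : [a,b] → ℝ be twice differentiable, with real constants m and M such that m ≤ f''(x) ≤ M for all x ∈ [a,b]. Then m(b−a)²/48 ≤ (1/2)·( (f(a)+f(b))/2 + f((a+b)/2) ) − (1/(b−a))·∫_a^b f(t) dt ≤ M(b−a)²/48. -/

import Mathlib

open MeasureTheory intervalIntegral

/-- Trapezoid bound: a convex continuous function lies below its chord, so its
integral is at most the trapezoid value. -/
lemma trap_aux {a b : ℝ} (hab : a ≤ b) {g : ℝ → ℝ}
    (hg : ConvexOn ℝ (Set.Icc a b) g) (hc : ContinuousOn g (Set.Icc a b)) :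
    ∫ t in a..b, g t ≤ (b - a) * (g a + g b) / 2 := by
  rcases eq_or_lt_of_le hab with rfl | hab'
  · simp
  have hba : (0:ℝ) < b - a := by linarith
  have hL : ∫ t in a..b, (g a + (t - a) * ((g b - g a) / (b - a))) =
      (b - a) * (g a + g b) / 2 := by
    have : ∫ t in a..b, (g a + (t - a) * ((g b - g a) / (b - a)))
        = ∫ t in a..b, (((g b - g a) / (b - a)) * t + (g a - a * ((g b - g a) / (b - a)))) := by
      congr 1; ext t; ring
    rw [this]
    rw [_root_.intervalIntegral.integral_add, _root_.intervalIntegral.integral_const_mul, integral_id, _root_.intervalIntegral.integral_const]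
    · rw [smul_eq_mul]
      field_simp
      ring
    · exact (continuous_const.mul continuous_id).intervalIntegrable a b
    · exact intervalIntegrable_const
  calc ∫ t in a..b, g t ≤ ∫ t in a..b, (g a + (t - a) * ((g b - g a) / (b - a))) := by
        apply intervalIntegral.integral_mono_on hab
        · exact ContinuousOn.intervalIntegrable (by rw [Set.uIcc_of_le hab]; exact hc)
        · exact ((continuous_const.add ((continuous_id.sub continuous_const).mul
            continuous_const))).intervalIntegrable a b
        · intro t ht
          have hx0 : (0:ℝ) ≤ (b - t) / (b - a) := by
            apply div_nonneg <;> linarith [ht.1, ht.2]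
          have hy0 : (0:ℝ) ≤ (t - a) / (b - a) := by
            apply div_nonneg <;> linarith [ht.1, ht.2]
          have hsum : (b - t) / (b - a) + (t - a) / (b - a) = 1 := by
            field_simp
            ring
          have hcomb := hg.2 (Set.left_mem_Icc.2 hab) (Set.right_mem_Icc.2 hab)
            hx0 hy0 hsum
          simp only [smul_eq_mul] at hcomb
          have heq : (b - t) / (b - a) * a + (t - a) / (b - a) * b = t := by
            field_simp; ring
          rw [heq] at hcomb
          calc g t ≤ (b - t) / (b - a) * g a + (t - a) / (b - a) * g b := hcomb
            _ = g a + (t - a) * ((g b - g a) / (b - a)) := by field_simp; ring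
    _ = (b - a) * (g a + g b) / 2 := hL

/-- Bullen's inequality. -/
lemma bullen_aux {a b : ℝ} (hab : a < b) {g : ℝ → ℝ}
    (hg : ConvexOn ℝ (Set.Icc a b) g) (hc : ContinuousOn g (Set.Icc a b)) :
    (1 / (b - a)) * ∫ t in a..b, g t ≤ (1 / 2) * ((g a + g b) / 2 + g ((a + b) / 2)) := by
  set c := (a + b) / 2 with hc_def
  have hac : a ≤ c := by rw [hc_def]; linarith
  have hcb : c ≤ b := by rw [hc_def]; linarith
  have hsub1 : Set.Icc a c ⊆ Set.Icc a b := Set.Icc_subset_Icc le_rfl hcb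
  have hsub2 : Set.Icc c b ⊆ Set.Icc a b := Set.Icc_subset_Icc hac le_rfl
  have h1 : ∫ t in a..c, g t ≤ (c - a) * (g a + g c) / 2 :=
    trap_aux hac (hg.subset hsub1 (convex_Icc a c)) (hc.mono hsub1)
  have h2 : ∫ t in c..b, g t ≤ (b - c) * (g c + g b) / 2 :=
    trap_aux hcb (hg.subset hsub2 (convex_Icc c b)) (hc.mono hsub2)
  have hspl : (∫ t in a..c, g t) + ∫ t in c..b, g t = ∫ t in a..b, g t := by
    apply intervalIntegral.integral_add_adjacent_intervals
    · exact ContinuousOn.intervalIntegrable (by rw [Set.uIcc_of_le hac]; exact hc.mono hsub1)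
    · exact ContinuousOn.intervalIntegrable (by rw [Set.uIcc_of_le hcb]; exact hc.mono hsub2)
  have hint : ∫ t in a..b, g t ≤ (b - a) / 4 * (g a + g b + 2 * g c) := by
    rw [← hspl]
    have hca : c - a = (b - a) / 2 := by rw [hc_def]; ring
    have hbc : b - c = (b - a) / 2 := by rw [hc_def]; ring
    rw [hca] at h1; rw [hbc] at h2
    linarith
  have hba : (0:ℝ) < b - a := by linarith
  calc (1 / (b - a)) * ∫ t in a..b, g t
      ≤ (1 / (b - a)) * ((b - a) / 4 * (g a + g b + 2 * g c)) := by
        apply mul_le_mul_of_nonneg_left hint (by positivity)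
    _ = (1 / 2) * ((g a + g b) / 2 + g c) := by field_simp; ring

theorem fejer_stmt_6 (a b : ℝ) (hab : a < b) (f f' f'' : ℝ → ℝ) (m M : ℝ)
    (hf' : ∀ x ∈ Set.Icc a b, HasDerivWithinAt f (f' x) (Set.Icc a b) x)
    (hf'' : ∀ x ∈ Set.Icc a b, HasDerivWithinAt f' (f'' x) (Set.Icc a b) x)
    (hm : ∀ x ∈ Set.Icc a b, m ≤ f'' x)
    (hM : ∀ x ∈ Set.Icc a b, f'' x ≤ M) :
    m * (b - a) ^ 2 / 48
        ≤ (1 / 2) * ((f a + f b) / 2 + f ((a + b) / 2))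
            - (1 / (b - a)) * (∫ t in a..b, f t) ∧
    (1 / 2) * ((f a + f b) / 2 + f ((a + b) / 2)) - (1 / (b - a)) * (∫ t in a..b, f t)
        ≤ M * (b - a) ^ 2 / 48 := by
  have hIoo : interior (Set.Icc a b) = Set.Ioo a b := interior_Icc
  have hIooSub : Set.Ioo a b ⊆ Set.Icc a b := Set.Ioo_subset_Icc_self
  have hfc : ContinuousOn f (Set.Icc a b) := fun x hx => (hf' x hx).continuousWithinAt
  have hfi : IntervalIntegrable f volume a b :=
    ContinuousOn.intervalIntegrable (by rw [Set.uIcc_of_le hab.le]; exact hfc)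
  have hba : (0:ℝ) < b - a := by linarith
  -- convexity of f - m/2 x^2
  have conv_lemma : ∀ (k : ℝ) (s : ℝ) (F : ℝ → ℝ),
      (F = fun x => s * (f x - k / 2 * x ^ 2)) → (∀ x ∈ Set.Icc a b, 0 ≤ s * (f'' x - k)) →
      ConvexOn ℝ (Set.Icc a b) F := by
    intro k s F hF hpos
    apply convexOn_of_hasDerivWithinAt2_nonneg (convex_Icc a b)
      (f' := fun x => s * (f' x - k * x)) (f'' := fun x => s * (f'' x - k))
    · rw [hF]
      exact continuousOn_const.mul (hfc.sub ((continuous_const.mul (continuous_pow 2)).continuousOn))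
    · intro x hx
      rw [hIoo] at hx ⊢
      rw [hF]
      have h1 : HasDerivWithinAt (fun x : ℝ => k / 2 * x ^ 2) (k * x) (Set.Ioo a b) x := by
        have := ((hasDerivAt_pow 2 x).const_mul (k / 2)).hasDerivWithinAt (s := Set.Ioo a b)
        exact this.congr_deriv (by push_cast; ring)
      exact (((hf' x (hIooSub hx)).mono hIooSub).sub h1).const_mul s
    · intro x hx
      rw [hIoo] at hx ⊢
      have h1 : HasDerivWithinAt (fun x : ℝ => k * x) k (Set.Ioo a b) x :=
        (hasDerivAt_id x).const_mul k |>.hasDerivWithinAt.congr_deriv (by ring)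
      exact (((hf'' x (hIooSub hx)).mono hIooSub).sub h1).const_mul s
    · intro x hx
      rw [hIoo] at hx
      exact hpos x (hIooSub hx)
  have hsqint : (∫ t in a..b, t ^ 2) = (b ^ 3 - a ^ 3) / 3 := by
    rw [integral_pow]; norm_num
  have hsqi : IntervalIntegrable (fun t : ℝ => t ^ 2) volume a b :=
    (continuous_pow 2).intervalIntegrable a b
  constructor
  · -- lower bound: g = f - m/2 x^2 is convex
    have hconv := conv_lemma m 1 (fun x => 1 * (f x - m / 2 * x ^ 2)) rfl
      (fun x hx => by have := hm x hx; nlinarith)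
    have hcont : ContinuousOn (fun x => 1 * (f x - m / 2 * x ^ 2)) (Set.Icc a b) :=
      continuousOn_const.mul (hfc.sub ((continuous_const.mul (continuous_pow 2)).continuousOn))
    have hB := bullen_aux hab hconv hcont
    have hIg : (∫ t in a..b, 1 * (f t - m / 2 * t ^ 2))
        = (∫ t in a..b, f t) - m / 2 * ((b ^ 3 - a ^ 3) / 3) := by
      simp only [one_mul]
      rw [intervalIntegral.integral_sub hfi ((hsqi.const_mul (m/2)))]
      rw [intervalIntegral.integral_const_mul, hsqint]
    rw [hIg] at hB
    simp only [one_mul] at hB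
    have key : (1 / (b - a)) * ((∫ t in a..b, f t) - m / 2 * ((b ^ 3 - a ^ 3) / 3))
        = (1 / (b - a)) * (∫ t in a..b, f t) - m / 2 * ((a^2 + a*b + b^2) / 3) := by
      field_simp
      ring
    rw [key] at hB
    nlinarith [hB]
  · -- upper bound: g = M/2 x^2 - f = (-1) * (f - M/2 x^2)
    have hconv := conv_lemma M (-1) (fun x => (-1) * (f x - M / 2 * x ^ 2)) rfl
      (fun x hx => by have := hM x hx; nlinarith)
    have hcont : ContinuousOn (fun x => (-1:ℝ) * (f x - M / 2 * x ^ 2)) (Set.Icc a b) :=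
      continuousOn_const.mul (hfc.sub ((continuous_const.mul (continuous_pow 2)).continuousOn))
    have hB := bullen_aux hab hconv hcont
    have hIg : (∫ t in a..b, (-1:ℝ) * (f t - M / 2 * t ^ 2))
        = -((∫ t in a..b, f t) - M / 2 * ((b ^ 3 - a ^ 3) / 3)) := by
      rw [intervalIntegral.integral_const_mul]
      rw [intervalIntegral.integral_sub hfi ((hsqi.const_mul (M/2)))]
      rw [intervalIntegral.integral_const_mul, hsqint]
      ring
    rw [hIg] at hB
    simp only [neg_one_mul] at hB
    have key : (1 / (b - a)) * -((∫ t in a..b, f t) - M / 2 * ((b ^ 3 - a ^ 3) / 3))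
        = -((1 / (b - a)) * (∫ t in a..b, f t)) + M / 2 * ((a^2 + a*b + b^2) / 3) := by
      field_simp
      ring
    rw [key] at hB
    nlinarith [hB]
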